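/- Let R ≅ K^e S be a twisted semigroup algebra of a finitely generated commutative monoid S over an algebraically closed field K, and suppose R is a domain. Then S is cancellative and its universal (Grothendieck) group G is torsionfree; consequently R is a quantum affine toric variety. -/

import Mathlib

set_option linter.unusedSectionVars false
set_option maxHeartbeats 1000000


/-- A quantum affine space `O_q(Kⁿ)`: an algebra `A` with basis
`(x^α)_{α ∈ ℕⁿ}` and multiplication `x^α x^β = d(α,β) x^{α+β}` where
`d(α,β) = ∏_{i>j} q_{ij}^{α_i β_j}` for a multiplicatively skew-symmetric
matrix `q`. -/
structure QuantumAffine (K : Type) [Field K] (n : ℕ) (A : Type) [Ring A] [Algebra K A] where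
  q : Fin n → Fin n → Kˣ
  q_diag : ∀ i, q i i = 1
  q_skew : ∀ i j, q j i = (q i j)⁻¹
  d : (Fin n → ℕ) → (Fin n → ℕ) → Kˣ
  d_eq : ∀ α β, d α β = ∏ i : Fin n, ∏ j : Fin n,
      if (j : ℕ) < (i : ℕ) then q i j ^ (α i * β j) else 1
  x : (Fin n → ℕ) → A
  basis : Module.Basis (Fin n → ℕ) K A
  basis_eq : ∀ α, basis α = x α
  x_mul : ∀ α β, x α * x β = ((d α β : K)) • x (α + β)
  x_zero : x 0 = 1

namespace QuantumAffine

variable {K : Type} [Field K] {n : ℕ} {A : Type} [Ring A] [Algebra K A]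

/-- A binomial ideal of a quantum affine space: a two-sided ideal generated by
nonzero elements `λ x^α + μ x^β` with `α, β ∈ ℕⁿ`. -/
def IsBinomialIdeal (Q : QuantumAffine K n A) (B : TwoSidedIdeal A) : Prop :=
  ∃ S : Set A,
    (∀ b ∈ S, b ≠ 0 ∧ ∃ (l m : K) (α β : Fin n → ℕ), b = l • Q.x α + m • Q.x β) ∧
    B = TwoSidedIdeal.span S

/-- The relation `α ∼ β ⟺ K·(x^α + B) = K·(x^β + B)` on `ℕⁿ`. -/
def rel (Q : QuantumAffine K n A) (B : TwoSidedIdeal A) (α β : Fin n → ℕ) : Prop :=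
  (Q.x α ∈ B ∧ Q.x β ∈ B) ∨ ∃ lam : Kˣ, Q.x α - ((lam : K)) • Q.x β ∈ B

end QuantumAffine


open Polynomial in
lemma expand_comm_prod {K R : Type} [Field K] [Ring R] [Algebra K R]
    {X Y : R} (hc : X * Y = Y * X) (l : List K) :
    (l.map (fun ρ => X - ρ • Y)).prod =
      ∑ k ∈ Finset.range (l.length + 1),
        ((l.map (fun ρ => (Polynomial.X - Polynomial.C ρ : K[X]))).prod.coeff k)
          • (X ^ k * Y ^ (l.length - k)) := by
  induction l with
  | nil => simp
  | cons ρ l ih =>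
      have hYX : ∀ k : ℕ, Y * X ^ k = X ^ k * Y := fun k =>
        ((Commute.pow_right (hc.symm : Commute Y X)) k).eq
      rw [List.map_cons, List.prod_cons, ih, List.map_cons, List.prod_cons,
        List.length_cons]
      set Q : K[X] := (l.map (fun ρ => (Polynomial.X - Polynomial.C ρ : K[X]))).prod with hQ
      set L := l.length with hL
      have hdeg : Q.natDegree ≤ L := by
        refine le_trans (Polynomial.natDegree_list_prod_le _) ?_
        rw [List.map_map]
        refine le_trans (List.sum_le_card_nsmul _ 1 ?_) (by simp [hL])
        intro x hx
        rw [List.mem_map] at hx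
        obtain ⟨a, _, rfl⟩ := hx
        simp [Polynomial.natDegree_X_sub_C]
      have hQtop : Q.coeff (L + 1) = 0 :=
        Polynomial.coeff_eq_zero_of_natDegree_lt (lt_of_le_of_lt hdeg (Nat.lt_succ_self _))
      have hrhs : ∑ k ∈ Finset.range (L + 1 + 1),
          (((Polynomial.X - Polynomial.C ρ) * Q).coeff k) • (X ^ k * Y ^ (L + 1 - k)) =
          (∑ k ∈ Finset.range (L + 1), (Q.coeff k) • (X ^ (k+1) * Y ^ (L - k)))
          - ∑ k ∈ Finset.range (L + 1), (ρ * Q.coeff k) • (X ^ k * Y ^ (L + 1 - k)) := by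
        have hco : ∀ k, ((Polynomial.X - Polynomial.C ρ) * Q).coeff k
            = (Polynomial.X * Q).coeff k - ρ * Q.coeff k := by
          intro k
          rw [sub_mul, Polynomial.coeff_sub, Polynomial.coeff_C_mul]
        simp only [hco, sub_smul, Finset.sum_sub_distrib]
        congr 1
        · rw [Finset.sum_range_succ']
          simp only [Polynomial.coeff_X_mul]
          have h0 : (Polynomial.X * Q).coeff 0 = 0 := by
            rw [Polynomial.mul_coeff_zero, Polynomial.coeff_X_zero, zero_mul]
          rw [h0, zero_smul, add_zero]
          refine Finset.sum_congr rfl fun k hk => ?_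
          have hsub : L + 1 - (k + 1) = L - k := by omega
          rw [hsub]
        · rw [Finset.sum_range_succ, hQtop, mul_zero, zero_smul, add_zero]
      rw [hrhs]
      rw [sub_mul, Finset.mul_sum, Finset.mul_sum]
      congr 1
      · refine Finset.sum_congr rfl fun k hk => ?_
        rw [mul_smul_comm, ← mul_assoc, ← pow_succ']
      · refine Finset.sum_congr rfl fun k hk => ?_
        have hk' : k ≤ L := Nat.lt_succ_iff.mp (Finset.mem_range.mp hk)
        rw [smul_mul_assoc, mul_smul_comm, smul_smul, ← mul_assoc, hYX, mul_assoc,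
          ← pow_succ', Nat.succ_sub hk']


open Polynomial in
lemma eq_smul_of_comm_pow_eq {K R : Type} [Field K] [IsAlgClosed K] [Ring R] [Algebra K R]
    [IsDomain R] {X Y : R} (hc : X * Y = Y * X) {n : ℕ} (hn : n ≠ 0) (r : K)
    (h : X ^ n = r • Y ^ n) : ∃ ρ : K, X = ρ • Y := by
  set P : K[X] := Polynomial.X ^ n - Polynomial.C r with hP
  have hmonic : P.Monic := Polynomial.monic_X_pow_sub_C r hn
  have hsplits : P.Splits := IsAlgClosed.splits P
  have hcard : P.roots.card = n := by
    rw [(Polynomial.splits_iff_card_roots).mp hsplits, Polynomial.natDegree_X_pow_sub_C]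
  have hfac : P = (P.roots.map (fun a => Polynomial.X - Polynomial.C a)).prod :=
    hsplits.eq_prod_roots_of_monic hmonic
  set l : List K := P.roots.toList with hl
  have hlen : l.length = n := by rw [hl, Multiset.length_toList, hcard]
  have hlprod : (l.map (fun a => Polynomial.X - Polynomial.C a)).prod = P := by
    rw [hfac]
    rw [← Multiset.prod_coe (l.map (fun a => Polynomial.X - Polynomial.C a))]
    congr 1
    rw [← Multiset.map_coe, hl, Multiset.coe_toList]
  have hexp := expand_comm_prod hc l
  rw [hlprod, hlen] at hexp
  have hPc : ∀ k ∈ Finset.range (n+1), (P.coeff k) • (X ^ k * Y ^ (n - k))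
      = (if k = n then (1:K) else 0) • (X ^ k * Y ^ (n-k))
        - (if k = 0 then r else 0) • (X ^ k * Y ^ (n-k)) := by
    intro k _
    rw [hP, Polynomial.coeff_sub, Polynomial.coeff_X_pow, Polynomial.coeff_C, sub_smul]
  rw [Finset.sum_congr rfl hPc, Finset.sum_sub_distrib] at hexp
  have h1 : ∑ k ∈ Finset.range (n+1), (if k = n then (1:K) else 0) • (X ^ k * Y ^ (n-k))
      = X ^ n := by
    simp only [ite_smul, zero_smul]
    rw [Finset.sum_ite_eq' (Finset.range (n+1)) n]
    simp
  have h2 : ∑ k ∈ Finset.range (n+1), (if k = 0 then r else 0) • (X ^ k * Y ^ (n-k))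
      = r • Y ^ n := by
    simp only [ite_smul, zero_smul]
    rw [Finset.sum_ite_eq' (Finset.range (n+1)) 0]
    simp
  rw [h1, h2, ← h, sub_self] at hexp
  have h0 : (0:R) ∈ l.map (fun ρ => X - ρ • Y) := by
    rw [← List.prod_eq_zero_iff, ← hexp]
  rw [List.mem_map] at h0
  obtain ⟨ρ, _, hρ⟩ := h0
  exact ⟨ρ, by rw [← sub_eq_zero, hρ]⟩


section TSA
variable {K : Type} [Field K] [IsAlgClosed K]
    {R : Type} [Ring R] [Algebra K R] [IsDomain R]
    {S : Type} [AddCommMonoid S]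
    (e : S → S → Kˣ) (z : S → R) (bas : Module.Basis S K R)
    (hbas : ∀ s, bas s = z s)
    (hmul : ∀ s t, z s * z t = ((e s t : K)) • z (s + t))

include hbas in
lemma tsa_z_ne (w : S) : z w ≠ 0 := hbas w ▸ bas.ne_zero w

include hbas in
lemma tsa_index_eq {a b : S} {c : K} (h : z a = c • z b) : a = b := by
  by_contra hne
  have h' : bas a = c • bas b := by rw [hbas, hbas]; exact h
  have := congrArg (fun r => bas.repr r a) h'
  simp only [Module.Basis.repr_self, map_smul, Finsupp.smul_apply] at this
  rw [Finsupp.single_eq_of_ne' (Ne.symm hne)] at this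
  simp at this

lemma tsa_smul_cancel {c d : K} {w : R} (hw : w ≠ 0) (h : c • w = d • w) : c = d := by
  have : (c - d) • w = 0 := by rw [sub_smul, h, sub_self]
  rcases smul_eq_zero.mp this with h' | h'
  · exact sub_eq_zero.mp h'
  · exact absurd h' hw

include hmul in
lemma tsa_pow_z (w : S) : ∀ k : ℕ, k ≠ 0 → ∃ α : Kˣ, (z w) ^ k = (α : K) • z (k • w) := by
  intro k
  induction k with
  | zero => intro h; exact absurd rfl h
  | succ k ih =>
      intro _
      rcases Nat.eq_zero_or_pos k with hk | hk
      · subst hk; exact ⟨1, by simp⟩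
      · obtain ⟨α, hα⟩ := ih (Nat.pos_iff_ne_zero.mp hk)
        refine ⟨α * e (k • w) w, ?_⟩
        rw [pow_succ, hα, smul_mul_assoc, hmul, smul_smul, succ_nsmul]
        push_cast
        ring_nf

include hmul in
lemma tsa_z_comm (a b : S) :
    z a * z b = ((e a b * (e b a)⁻¹ : Kˣ) : K) • (z b * z a) := by
  rw [hmul, hmul, add_comm b a, smul_smul]
  congr 1
  push_cast
  field_simp

lemma tsa_comm_pow_left {u v : R} {γ : K} (h : u * v = γ • (v * u)) :
    ∀ k : ℕ, u ^ k * v = γ ^ k • (v * u ^ k) := by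
  intro k
  induction k with
  | zero => simp
  | succ k ih =>
      rw [pow_succ, mul_assoc, h, mul_smul_comm, ← mul_assoc, ih, smul_mul_assoc,
        smul_smul, ← pow_succ', mul_assoc, ← pow_succ]

lemma tsa_comm_pow_right {u v : R} {γ : K} (h : u * v = γ • (v * u)) :
    ∀ k : ℕ, u * v ^ k = γ ^ k • (v ^ k * u) := by
  intro k
  induction k with
  | zero => simp
  | succ k ih =>
      rw [pow_succ, ← mul_assoc, ih, smul_mul_assoc, mul_assoc, h, mul_smul_comm,
        smul_smul, ← pow_succ, ← mul_assoc]

end TSA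

section Torsion
variable {K : Type} [Field K] [IsAlgClosed K]
    {R : Type} [Ring R] [Algebra K R] [IsDomain R]
    {S : Type} [AddCommMonoid S]
    (e : S → S → Kˣ) (z : S → R) (bas : Module.Basis S K R)
    (hbas : ∀ s, bas s = z s)
    (hmul : ∀ s t, z s * z t = ((e s t : K)) • z (s + t))

include hbas hmul in
lemma tsa_torsion (hcancel : ∀ a b u : S, a + u = b + u → a = b)
    {m : ℕ} (hm : m ≠ 0) {a b : S} (h : m • a = m • b) : a = b := by
  obtain ⟨k, rfl⟩ := Nat.exists_eq_succ_of_ne_zero hm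
  set x := z a with hx
  set y := z b with hy
  obtain ⟨α, hα⟩ := tsa_pow_z e z hmul a (k+1) (Nat.succ_ne_zero k)
  obtain ⟨β, hβ⟩ := tsa_pow_z e z hmul b (k+1) (Nat.succ_ne_zero k)
  set w1 := a + k • b with hw1
  set XX := z w1 with hXX
  have hmm : (k+1) • w1 = ((k+1)*(k+1)) • b := by
    rw [hw1, smul_add, ← mul_nsmul, h, ← add_nsmul]
    congr 1
    simp [Nat.succ_eq_add_one]
    ring
  have hmma : ((k+1)*(k+1)) • a = ((k+1)*(k+1)) • b := by
    rw [mul_nsmul, h, ← mul_nsmul]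
  obtain ⟨αX, hαX⟩ := tsa_pow_z e z hmul w1 (k+1) (Nat.succ_ne_zero k)
  obtain ⟨α2, hα2⟩ := tsa_pow_z e z hmul a ((k+1)*(k+1)) (Nat.mul_ne_zero (Nat.succ_ne_zero k) (Nat.succ_ne_zero k))
  have hXm : XX^(k+1) = ((αX * α2⁻¹ : Kˣ):K) • x^((k+1)*(k+1)) := by
    rw [hαX, hmm, hα2, hmma, smul_smul]
    congr 1
    push_cast
    field_simp
  set c : Kˣ := αX * α2⁻¹ with hc
  have hxX := tsa_z_comm e z hmul a w1
  set δ : Kˣ := e a w1 * (e w1 a)⁻¹ with hδ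
  have hδm : ((δ:K))^(k+1) = 1 := by
    have h1 := tsa_comm_pow_right (u:=x) (v:=XX) (γ:=(δ:K)) hxX (k+1)
    rw [hXm, mul_smul_comm, smul_mul_assoc, ← pow_succ', ← pow_succ, smul_smul] at h1
    have h2 := tsa_smul_cancel (pow_ne_zero _ (tsa_z_ne z bas hbas a)) h1
    exact (mul_right_cancel₀ (Units.ne_zero c) (by rw [one_mul]; exact h2)).symm
  have hyX := tsa_z_comm e z hmul b w1
  set γ : Kˣ := e b w1 * (e w1 b)⁻¹ with hγ
  have hym : y^(k+1) = ((β * α⁻¹ : Kˣ):K) • x^(k+1) := by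
    rw [hβ, hα, h, smul_smul]
    congr 1
    push_cast
    field_simp
  have hγm : ((γ:K))^(k+1) = 1 := by
    have h2 := tsa_comm_pow_left (u:=y) (v:=XX) (γ:=(γ:K)) hyX (k+1)
    rw [hym, smul_mul_assoc, mul_smul_comm, smul_smul] at h2
    have h3 := tsa_comm_pow_left (u:=x) (v:=XX) (γ:=(δ:K)) hxX (k+1)
    rw [hδm, one_smul] at h3
    rw [h3] at h2
    have hne : XX * x^(k+1) ≠ 0 :=
      mul_ne_zero (tsa_z_ne z bas hbas w1) (pow_ne_zero _ (tsa_z_ne z bas hbas a))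
    have h4 := tsa_smul_cancel hne h2
    exact (mul_right_cancel₀ (Units.ne_zero (β * α⁻¹)) (by rw [one_mul]; exact h4)).symm
  have hcomm : XX * y^(k+1) = y^(k+1) * XX := by
    have h2 := tsa_comm_pow_left (u:=y) (v:=XX) (γ:=(γ:K)) hyX (k+1)
    rw [hγm, one_smul] at h2
    exact h2.symm
  have hYm : (y^(k+1))^(k+1) = (((β * α⁻¹)^(k+1) : Kˣ):K) • x^((k+1)*(k+1)) := by
    rw [hym, smul_pow, ← pow_mul]
    norm_cast
  have hfin : XX^(k+1) = ((c * ((β * α⁻¹)^(k+1))⁻¹ : Kˣ):K) • (y^(k+1))^(k+1) := by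
    rw [hXm, hYm, smul_smul]
    congr 1
    push_cast
    field_simp
  obtain ⟨ρ, hρ⟩ := eq_smul_of_comm_pow_eq hcomm (Nat.succ_ne_zero k) _ hfin
  rw [hβ, smul_smul] at hρ
  have hidx : w1 = (k+1) • b := tsa_index_eq z bas hbas hρ
  have hidx' : a + k • b = b + k • b := by rw [← hw1, hidx, succ_nsmul']
  exact hcancel a b (k • b) hidx'

end Torsion


section Groth
variable {S : Type} [AddCommMonoid S]

def grothSetoid (hc : ∀ a b u : S, a + u = b + u → a = b) : Setoid (S × S) where
  r p q := p.1 + q.2 = q.1 + p.2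
  iseqv := by
    refine ⟨fun p => rfl, fun {p q} h => h.symm, fun {p q r} h1 h2 => ?_⟩
    refine hc _ _ q.2 ?_
    calc (p.1 + r.2) + q.2 = (p.1 + q.2) + r.2 := by abel
      _ = (q.1 + p.2) + r.2 := by rw [h1]
      _ = (q.1 + r.2) + p.2 := by abel
      _ = (r.1 + q.2) + p.2 := by rw [h2]
      _ = (r.1 + p.2) + q.2 := by abel

variable (hc : ∀ a b u : S, a + u = b + u → a = b)

def GrothG (_hc : ∀ a b u : S, a + u = b + u → a = b) : Type := Quotient (grothSetoid _hc)

def GrothG.mk (p : S × S) : GrothG hc := Quotient.mk (grothSetoid hc) p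

lemma GrothG.sound {p q : S × S} (h : p.1 + q.2 = q.1 + p.2) :
    GrothG.mk hc p = GrothG.mk hc q := Quotient.sound h

lemma GrothG.exact {p q : S × S} (h : GrothG.mk hc p = GrothG.mk hc q) :
    p.1 + q.2 = q.1 + p.2 := Quotient.exact h

instance : Add (GrothG hc) :=
  ⟨Quotient.map₂ (fun p q => (p.1 + q.1, p.2 + q.2)) (by
    rintro ⟨a1, a2⟩ ⟨b1, b2⟩ hab ⟨c1, c2⟩ ⟨d1, d2⟩ hcd
    have hab' : a1 + b2 = b1 + a2 := hab
    have hcd' : c1 + d2 = d1 + c2 := hcd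
    show (a1 + c1) + (b2 + d2) = (b1 + d1) + (a2 + c2)
    calc (a1 + c1) + (b2 + d2) = (a1 + b2) + (c1 + d2) := by abel
      _ = (b1 + a2) + (d1 + c2) := by rw [hab', hcd']
      _ = (b1 + d1) + (a2 + c2) := by abel)⟩

instance : Zero (GrothG hc) := ⟨GrothG.mk hc (0, 0)⟩

instance : Neg (GrothG hc) :=
  ⟨Quotient.map (fun p => (p.2, p.1)) (by
    rintro ⟨a1, a2⟩ ⟨b1, b2⟩ hab
    have hab' : a1 + b2 = b1 + a2 := hab
    show a2 + b1 = b2 + a1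
    rw [add_comm a2 b1, add_comm b2 a1]
    exact hab'.symm)⟩

instance : AddCommGroup (GrothG hc) where
  add := (· + ·)
  zero := 0
  neg := (- ·)
  nsmul := nsmulRec
  zsmul := zsmulRec
  add_assoc := by
    rintro ⟨⟨a, b⟩⟩ ⟨⟨c, d⟩⟩ ⟨⟨f, g⟩⟩
    refine Quotient.sound ?_
    show ((a + c) + f) + (b + (d + g)) = (a + (c + f)) + ((b + d) + g)
    abel
  zero_add := by
    rintro ⟨⟨a, b⟩⟩
    refine Quotient.sound ?_
    show (0 + a) + b = a + (0 + b)
    abel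
  add_zero := by
    rintro ⟨⟨a, b⟩⟩
    refine Quotient.sound ?_
    show (a + 0) + b = a + (b + 0)
    abel
  neg_add_cancel := by
    rintro ⟨⟨a, b⟩⟩
    refine Quotient.sound ?_
    show (b + a) + 0 = 0 + (a + b)
    abel
  add_comm := by
    rintro ⟨⟨a, b⟩⟩ ⟨⟨c, d⟩⟩
    refine Quotient.sound ?_
    show (a + c) + (d + b) = (c + a) + (b + d)
    abel

lemma GrothG.mk_add (p q : S × S) :
    GrothG.mk hc p + GrothG.mk hc q = GrothG.mk hc (p.1 + q.1, p.2 + q.2) :=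
  Quotient.map₂_mk _ _ _ _

lemma GrothG.mk_neg (p : S × S) : -(GrothG.mk hc p) = GrothG.mk hc (p.2, p.1) :=
  Quotient.map_mk _ _ _

lemma GrothG.zero_def : (0 : GrothG hc) = GrothG.mk hc (0, 0) := rfl

lemma GrothG.mk_nsmul (m : ℕ) (p : S × S) :
    m • GrothG.mk hc p = GrothG.mk hc (m • p.1, m • p.2) := by
  induction m with
  | zero => simp only [zero_smul, zero_nsmul]; rfl
  | succ k ih =>
      rw [succ_nsmul, ih, GrothG.mk_add]
      exact GrothG.sound hc (by show _ = _; rw [succ_nsmul, succ_nsmul])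

def GrothG.incl : S →+ GrothG hc where
  toFun s := GrothG.mk hc (s, 0)
  map_zero' := rfl
  map_add' s t := by
    show GrothG.mk hc (s + t, 0) = GrothG.mk hc (s, 0) + GrothG.mk hc (t, 0)
    rw [GrothG.mk_add]
    exact GrothG.sound hc (by simp)

lemma GrothG.incl_injective : Function.Injective (GrothG.incl hc) := by
  intro s t h
  have := GrothG.exact hc h
  simpa using this

lemma GrothG.surj (g : GrothG hc) : ∃ s t : S, g = GrothG.incl hc s - GrothG.incl hc t := by
  obtain ⟨⟨a, b⟩⟩ := g
  refine ⟨a, b, ?_⟩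
  rw [sub_eq_add_neg]
  show _ = GrothG.mk hc (a, 0) + -(GrothG.mk hc (b, 0))
  rw [GrothG.mk_neg, GrothG.mk_add]
  exact GrothG.sound hc (by simp [add_comm])

end Groth

/-- If `R ≅ K^e S` is a twisted semigroup algebra of a finitely generated
commutative monoid over an algebraically closed field and `R` is a domain, then
`S` is cancellative, its universal (Grothendieck) group is torsionfree, and
consequently `R` is a quantum affine toric variety, i.e. a twisted semigroup
algebra of a finitely generated submonoid of a free abelian group of finite
rank. -/
theorem twisted_semigroup_algebra_domain_toric {K : Type} [Field K] [IsAlgClosed K]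
    (R : Type) [Ring R] [Algebra K R] [IsDomain R]
    (S : Type) [AddCommMonoid S] (hFG : AddMonoid.FG S)
    (e : S → S → Kˣ) (z : S → R) (bas : Module.Basis S K R)
    (hbas : ∀ s, bas s = z s)
    (hmul : ∀ s t, z s * z t = ((e s t : K)) • z (s + t)) :
    (∀ s t u : S, s + u = t + u → s = t) ∧
    (∃ (G : Type) (_ : AddCommGroup G) (ι : S →+ G),
      Function.Injective ι ∧ (∀ g : G, ∃ s t : S, g = ι s - ι t) ∧
      ∀ (g : G) (m : ℕ), m ≠ 0 → m • g = 0 → g = 0) ∧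
    (∃ (r : ℕ) (S' : AddSubmonoid (Fin r → ℤ)) (_ : S'.FG)
        (e' : S' → S' → Kˣ) (z' : S' → R) (bas' : Module.Basis S' K R),
        (∀ s, bas' s = z' s) ∧
        ∀ s t, z' s * z' t = ((e' s t : K)) • z' (s + t)) := by
  classical
  have hzne : ∀ w : S, z w ≠ 0 := tsa_z_ne z bas hbas
  -- Part 1: cancellativity
  have hcancel : ∀ s t u : S, s + u = t + u → s = t := by
    intro s t u hstu
    set c : Kˣ := e s u * (e t u)⁻¹ with hc
    have hprod : (z s - (c : K) • z t) * z u = 0 := by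
      rw [sub_mul, smul_mul_assoc, hmul, hmul, hstu, smul_smul, sub_eq_zero,
        ← Units.val_mul, hc, inv_mul_cancel_right]
    rcases mul_eq_zero.mp hprod with h0 | h0
    · exact tsa_index_eq z bas hbas (sub_eq_zero.mp h0)
    · exact absurd h0 (hzne u)
  -- torsion-freeness of the Grothendieck group
  have htor : ∀ (g : GrothG hcancel) (m : ℕ), m ≠ 0 → m • g = 0 → g = 0 := by
    intro g m hm hg
    obtain ⟨s', t', rfl⟩ := GrothG.surj hcancel g
    rw [smul_sub, ← map_nsmul, ← map_nsmul, sub_eq_zero] at hg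
    have hst : m • s' = m • t' := GrothG.incl_injective hcancel hg
    rw [tsa_torsion e z bas hbas hmul hcancel hm hst, sub_self]
  refine ⟨hcancel, ⟨GrothG hcancel, inferInstance, GrothG.incl hcancel,
    GrothG.incl_injective hcancel, GrothG.surj hcancel, htor⟩, ?_⟩
  -- Part 3: embedding into ℤ^r
  obtain ⟨gens, hgens⟩ := hFG.fg_top
  haveI hGfg : AddGroup.FG (GrothG hcancel) := by
    refine ⟨⟨gens.image (GrothG.incl hcancel), ?_⟩⟩
    rw [eq_top_iff]
    rintro g -
    obtain ⟨s', t', rfl⟩ := GrothG.surj hcancel g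
    have hmem : ∀ u : S, (GrothG.incl hcancel) u ∈
        AddSubgroup.closure (↑(gens.image (GrothG.incl hcancel)) : Set (GrothG hcancel)) := by
      intro u
      have hu : u ∈ AddSubmonoid.closure (↑gens : Set S) := by
        rw [hgens]; exact AddSubmonoid.mem_top u
      induction hu using AddSubmonoid.closure_induction with
      | mem v hv =>
          exact AddSubgroup.subset_closure
            (Finset.mem_coe.mpr (Finset.mem_image_of_mem _ hv))
      | zero => rw [map_zero]; exact zero_mem _
      | add x y hx hy hx' hy' => rw [map_add]; exact add_mem hx' hy'
    exact sub_mem (hmem s') (hmem t')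
  haveI : Module.Finite ℤ (GrothG hcancel) := Module.Finite.iff_addGroup_fg.mpr hGfg
  haveI : NoZeroSMulDivisors ℤ (GrothG hcancel) := by
    refine ⟨fun {n} {g} h => ?_⟩
    by_cases hn : n = 0
    · exact Or.inl hn
    · refine Or.inr ?_
      have h' : (n.natAbs : ℤ) • g = 0 := by
        rcases Int.natAbs_eq n with hh | hh
        · rw [← hh]; exact h
        · rw [hh, neg_smul] at h
          exact neg_eq_zero.mp h
      rw [natCast_zsmul] at h'
      exact htor g n.natAbs (Int.natAbs_ne_zero.mpr hn) h'
  haveI : Module.Free ℤ (GrothG hcancel) := Module.free_of_finite_type_torsion_free'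
  set rk := Fintype.card (Module.Free.ChooseBasisIndex ℤ (GrothG hcancel)) with hrk
  let φL : GrothG hcancel ≃ₗ[ℤ] (Fin rk → ℤ) :=
    ((Module.Free.chooseBasis ℤ (GrothG hcancel)).reindex (Fintype.equivFin _)).equivFun
  let φ : GrothG hcancel ≃+ (Fin rk → ℤ) := φL.toAddEquiv
  let f : S →+ (Fin rk → ℤ) := φ.toAddMonoidHom.comp (GrothG.incl hcancel)
  have hfinj : Function.Injective f := by
    intro u v huv
    exact GrothG.incl_injective hcancel (φ.injective huv)
  haveI : AddMonoid.FG S := hFG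
  haveI hRfg : AddMonoid.FG (AddMonoidHom.mrange f) :=
    AddMonoid.fg_of_surjective f.mrangeRestrict f.mrangeRestrict_surjective
  have hfg' : (AddMonoidHom.mrange f).FG := (AddMonoid.fg_iff_addSubmonoid_fg _).mp hRfg
  have hbij : Function.Bijective f.mrangeRestrict := by
    constructor
    · intro u v huv
      apply hfinj
      have : (f.mrangeRestrict u : Fin rk → ℤ) = f.mrangeRestrict v := by rw [huv]
      rwa [AddMonoidHom.coe_mrangeRestrict, AddMonoidHom.coe_mrangeRestrict] at this
    · exact f.mrangeRestrict_surjective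
  let ψ : S ≃+ (AddMonoidHom.mrange f) := AddEquiv.ofBijective f.mrangeRestrict hbij
  refine ⟨rk, AddMonoidHom.mrange f, hfg',
    fun a b => e (ψ.symm a) (ψ.symm b), fun a => z (ψ.symm a),
    bas.reindex ψ.toEquiv, ?_, ?_⟩
  · intro a
    show (bas.reindex ψ.toEquiv) a = z (ψ.symm a)
    rw [Module.Basis.reindex_apply, hbas]
    rfl
  · intro a b
    show z (ψ.symm a) * z (ψ.symm b) = ((e (ψ.symm a) (ψ.symm b) : Kˣ) : K) • z (ψ.symm (a + b))
    rw [hmul, map_add]
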